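/- Let P be an n×n row-stochastic matrix, λ ∈ (0,1), and X(λ) = (1−λ)(Id − λP)^{-1} = (x_{ij}). Then for every i, the diagonal entry dominates its column: x_{ii} = max_j x_{ji}. -/
import Mathlib

theorem stmt_7 (n : ℕ) (P : Matrix (Fin n) (Fin n) ℝ)
    (hnonneg : ∀ i j, 0 ≤ P i j) (hrow : ∀ i, ∑ j, P i j = 1)
    (l : ℝ) (hl0 : 0 < l) (hl1 : l < 1)
    (X : Matrix (Fin n) (Fin n) ℝ) (hX : X = (1 - l) • (1 - l • P)⁻¹) :
    ∀ i : Fin n,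
      X i i = Finset.univ.sup' ⟨i, Finset.mem_univ i⟩ (fun j => X j i) := by
  intro i
  have hne : (Finset.univ : Finset (Fin n)).Nonempty := ⟨i, Finset.mem_univ i⟩
  set A : Matrix (Fin n) (Fin n) ℝ := 1 - l • P with hA
  -- det A ≠ 0
  have hdet : A.det ≠ 0 := by
    intro h
    obtain ⟨v, hv, hv0⟩ := (Matrix.exists_mulVec_eq_zero_iff).2 h
    -- v j = l * ∑ k, P j k * v k
    have hkey : ∀ j, v j = l * ∑ k, P j k * v k := by
      intro j
      have := congrFun hv0 j
      simp only [Matrix.mulVec, dotProduct, hA, Matrix.sub_apply,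
        Matrix.smul_apply, Matrix.one_apply, Pi.zero_apply, smul_eq_mul] at this
      have h2 : ∑ k, ((if j = k then (1:ℝ) else 0) - l * P j k) * v k
          = v j - l * ∑ k, P j k * v k := by
        simp only [sub_mul]
        rw [Finset.sum_sub_distrib]
        congr 1
        · simp [Finset.sum_ite_eq]
        · rw [Finset.mul_sum]; congr 1; ext k; ring
      rw [h2] at this
      linarith
    obtain ⟨j0, _, hj0⟩ := Finset.exists_max_image Finset.univ (fun j => |v j|) hne
    have hmax : ∀ k, |v k| ≤ |v j0| := fun k => hj0 k (Finset.mem_univ k)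
    have hle : |v j0| ≤ l * |v j0| := by
      calc |v j0| = l * |∑ k, P j0 k * v k| := by
            rw [hkey j0, abs_mul, abs_of_pos hl0]
        _ ≤ l * ∑ k, |P j0 k * v k| := by
            have := Finset.abs_sum_le_sum_abs (fun k => P j0 k * v k) Finset.univ
            exact mul_le_mul_of_nonneg_left this hl0.le
        _ ≤ l * ∑ k, P j0 k * |v j0| := by
            apply mul_le_mul_of_nonneg_left _ hl0.le
            apply Finset.sum_le_sum
            intro k _
            rw [abs_mul, abs_of_nonneg (hnonneg j0 k)]
            exact mul_le_mul_of_nonneg_left (hmax k) (hnonneg j0 k)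
        _ = l * |v j0| := by rw [← Finset.sum_mul, hrow j0, one_mul]
    have hz : |v j0| ≤ 0 := by nlinarith
    apply hv
    ext k
    have := (hmax k).trans hz
    simpa using abs_nonpos_iff.1 (by linarith [abs_nonneg (v k)] : |v k| ≤ 0)
  have hunit : IsUnit A.det := isUnit_iff_ne_zero.2 hdet
  set G : Matrix (Fin n) (Fin n) ℝ := A⁻¹ with hG
  have hAG : A * G = 1 := Matrix.mul_nonsing_inv A hunit
  -- entrywise identity
  have key : ∀ j, G j i = (if j = i then (1:ℝ) else 0) + l * ∑ k, P j k * G k i := by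
    intro j
    have := congrFun (congrFun hAG j) i
    simp only [Matrix.mul_apply, hA, Matrix.sub_apply, Matrix.smul_apply,
      Matrix.one_apply, smul_eq_mul] at this
    have h2 : ∑ k, ((if j = k then (1:ℝ) else 0) - l * P j k) * G k i
        = G j i - l * ∑ k, P j k * G k i := by
      simp only [sub_mul]
      rw [Finset.sum_sub_distrib]
      congr 1
      · simp [Finset.sum_ite_eq]
      · rw [Finset.mul_sum]; congr 1; ext k; ring
    rw [h2] at this
    by_cases h : j = i <;> simp [h] at this ⊢ <;> linarith
  -- nonnegativity of column i
  have hnn : ∀ j, 0 ≤ G j i := by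
    set m := Finset.univ.inf' hne (fun j => G j i) with hm
    obtain ⟨j0, _, hj0⟩ := Finset.exists_mem_eq_inf' hne (fun j => G j i)
    rw [← hm] at hj0
    have hlb : ∀ k, m ≤ G k i := fun k => Finset.inf'_le _ (Finset.mem_univ k)
    have hsum : m ≤ ∑ k, P j0 k * G k i := by
      calc m = ∑ k, P j0 k * m := by rw [← Finset.sum_mul, hrow j0, one_mul]
        _ ≤ ∑ k, P j0 k * G k i := by
            apply Finset.sum_le_sum
            intro k _
            exact mul_le_mul_of_nonneg_left (hlb k) (hnonneg j0 k)
    have h1 : l * m ≤ G j0 i := by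
      rw [key j0]
      have : (0:ℝ) ≤ if j0 = i then (1:ℝ) else 0 := by positivity
      nlinarith
    have hm0 : 0 ≤ m := by
      rw [← hj0] at h1
      nlinarith
    intro j
    exact hm0.trans (hlb j)
  -- diagonal dominance for G
  have hdom : ∀ j, G j i ≤ G i i := by
    set M := Finset.univ.sup' hne (fun j => G j i) with hM
    obtain ⟨j0, _, hj0⟩ := Finset.exists_mem_eq_sup' hne (fun j => G j i)
    rw [← hM] at hj0
    have hub : ∀ k, G k i ≤ M := by
      intro k
      rw [hM]
      exact Finset.le_sup' (fun j => G j i) (Finset.mem_univ k)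
    by_cases h : j0 = i
    · intro j
      have := hub j
      rw [hj0, h] at this
      exact this
    · exfalso
      have hsum : ∑ k, P j0 k * G k i ≤ M := by
        calc ∑ k, P j0 k * G k i ≤ ∑ k, P j0 k * M := by
              apply Finset.sum_le_sum
              intro k _
              exact mul_le_mul_of_nonneg_left (hub k) (hnonneg j0 k)
          _ = M := by rw [← Finset.sum_mul, hrow j0, one_mul]
      have hMle : M ≤ l * M := by
        have hk := key j0
        rw [if_neg h, zero_add] at hk
        rw [hj0, hk]
        nlinarith
      have hM0 : M ≤ 0 := by nlinarith
      have hGii : (1:ℝ) ≤ G i i := by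
        rw [key i, if_pos rfl]
        have : 0 ≤ ∑ k, P i k * G k i :=
          Finset.sum_nonneg fun k _ => mul_nonneg (hnonneg i k) (hnn k)
        nlinarith
      have := hub i
      linarith
  -- transfer to X
  have hXval : ∀ j k, X j k = (1 - l) * G j k := by
    intro j k
    rw [hX]
    simp [hG, hA, Matrix.smul_apply]
  apply le_antisymm
  · exact Finset.le_sup' (fun j => X j i) (Finset.mem_univ i)
  · apply Finset.sup'_le
    intro j _
    rw [hXval j i, hXval i i]
    exact mul_le_mul_of_nonneg_left (hdom j) (by linarith)
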